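/- Let n ≥ 1, q = 2^n, F_q the finite field with q elements, and let f : F_q → F_2 be a Boolean function. Let α be a primitive element of F_q, let l ≥ 0 and k ≥ 0 be integers, let δ be an integer with 1 ≤ δ ≤ q − 1, and let m ≥ 1 be an integer with gcd(m, q − 1) = 1. Suppose the zero set {x ∈ F_q : f(x) = 0} contains the union ∪_{j=0}^{k} V(α, l + jm + δ − 1, q − δ). Let e be the smallest positive integer such that ∑_{i=1}^{e} binom(n, i) ≥ q − δ + k. Then every nonzero polynomial g ∈ F_q[X] of degree at most q − 1 with g(x) = 0 for all x ∈ F_q with f(x) = 0 has algebraic degree at least e − 1; that is, LDA(1 + f) ≥ e − 1. -/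

import Mathlib

lemma wt_sum_eq : ∀ (m i : ℕ), i < 2^m →
    (Nat.digits 2 i).sum = ∑ b ∈ Finset.range m, if i.testBit b then 1 else 0 := by
  intro m
  induction m with
  | zero => intro i hi; interval_cases i; simp
  | succ m ih =>
    intro i hi
    rcases Nat.eq_zero_or_pos i with h0 | h0
    · subst h0; simp [Nat.zero_testBit]
    · rw [Nat.digits_def' (by norm_num) h0]
      rw [Finset.sum_range_succ']
      have hdiv : i / 2 < 2 ^ m := by
        have : i < 2 ^ m * 2 := by rw [← pow_succ]; exact hi
        omega
      have := ih (i / 2) hdiv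
      simp only [List.sum_cons]
      rw [this]
      have hb : ∀ b, i.testBit (b + 1) = (i / 2).testBit b := by
        intro b; rw [Nat.testBit_add_one]
      simp only [hb]
      have h0bit : (if i.testBit 0 then 1 else 0) = i % 2 := by
        rw [Nat.testBit_zero]
        rcases Nat.mod_two_eq_zero_or_one i with h | h <;> simp [h]
      omega

lemma wt_pred_pow : ∀ n : ℕ, (Nat.digits 2 (2^n - 1)).sum = n := by
  intro n
  induction n with
  | zero => simp
  | succ n ih =>
    have h1 : (0:ℕ) < 2 ^ (n+1) - 1 := by
      have : (2:ℕ) ≤ 2 ^ (n+1) := Nat.one_lt_two_pow (by omega)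
      omega
    rw [Nat.digits_def' (by norm_num) h1]
    have h2 : (2 ^ (n+1) - 1) = 2 * (2^n - 1) + 1 := by
      have : (1:ℕ) ≤ 2 ^ n := Nat.one_le_two_pow
      rw [pow_succ]; omega
    rw [h2]
    simp only [List.sum_cons]
    have : (2 * (2 ^ n - 1) + 1) % 2 = 1 := by omega
    rw [this]
    have : (2 * (2 ^ n - 1) + 1) / 2 = 2 ^ n - 1 := by omega
    rw [this, ih]; omega

lemma count_low_weight (n d : ℕ) (S : Finset ℕ) (hS : ∀ a ∈ S, a < 2^n)
    (hw : ∀ a ∈ S, (Nat.digits 2 a).sum ≤ d) :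
    S.card ≤ ∑ j ∈ Finset.range (d+1), n.choose j := by
  classical
  set T : Finset (Finset ℕ) :=
    (Finset.range (d+1)).biUnion (fun j => (Finset.range n).powersetCard j) with hT
  have hcard : T.card = ∑ j ∈ Finset.range (d+1), n.choose j := by
    rw [hT, Finset.card_biUnion]
    · apply Finset.sum_congr rfl
      intro j _
      rw [Finset.card_powersetCard, Finset.card_range]
    · intro a _ b _ hab
      apply Finset.disjoint_left.mpr
      intro s hsa hsb
      rw [Finset.mem_powersetCard] at hsa hsb
      exact hab (hsa.2 ▸ hsb.2 ▸ rfl)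
  rw [← hcard]
  apply Finset.card_le_card_of_injOn (fun a => (Finset.range n).filter (fun b => a.testBit b))
  · intro a ha
    rw [Finset.mem_coe, Finset.mem_biUnion]
    have hwt : ((Finset.range n).filter (fun b => a.testBit b)).card = (Nat.digits 2 a).sum := by
      rw [Finset.card_filter, wt_sum_eq n a (hS a ha)]
    refine ⟨((Finset.range n).filter (fun b => a.testBit b)).card, ?_, ?_⟩
    · rw [Finset.mem_range]; rw [hwt]; exact Nat.lt_succ_of_le (hw a ha)
    · rw [Finset.mem_powersetCard]; exact ⟨Finset.filter_subset _ _, rfl⟩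
  · intro a ha b hb hfab
    simp only [Finset.coe_mem] at *
    apply Nat.eq_of_testBit_eq
    intro i
    by_cases hi : i < n
    · have := Finset.ext_iff.mp hfab i
      simp only [Finset.mem_filter, Finset.mem_range] at this
      by_cases hta : a.testBit i
      · have := (this.mp ⟨hi, hta⟩).2; simp [hta, this]
      · by_cases htb : b.testBit i
        · exact absurd ((this.mpr ⟨hi, htb⟩).2) hta
        · simp [hta, htb]
    · have h1 : a.testBit i = false := Nat.testBit_lt_two_pow
        (lt_of_lt_of_le (hS a ha) (Nat.pow_le_pow_right (by norm_num) (by omega)))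
      have h2 : b.testBit i = false := Nat.testBit_lt_two_pow
        (lt_of_lt_of_le (hS b hb) (Nat.pow_le_pow_right (by norm_num) (by omega)))
      rw [h1, h2]

lemma vdm_kernel {K : Type} [Field K] {v : ℕ} (x : Fin v → K) (hx : Function.Injective x)
    (c : Fin v → K) (h : ∀ i : Fin v, ∑ u, c u * x u ^ (i : ℕ) = 0) : ∀ u, c u = 0 := by
  classical
  set A : Matrix (Fin v) (Fin v) K := Matrix.of (fun i u : Fin v => x u ^ (i : ℕ)) with hA
  have hAeq : A = (Matrix.vandermonde x).transpose := by
    ext i u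
    rw [Matrix.transpose_apply, Matrix.vandermonde]
    simp [hA]
  have hdet : A.det ≠ 0 := by
    rw [hAeq, Matrix.det_transpose, Matrix.det_vandermonde]
    apply Finset.prod_ne_zero_iff.mpr
    intro i _
    apply Finset.prod_ne_zero_iff.mpr
    intro j hj
    rw [Finset.mem_Ioi] at hj
    exact sub_ne_zero_of_ne (fun hEq => (ne_of_gt hj) (hx hEq))
  have hmv : A.mulVec c = 0 := by
    funext i
    rw [Matrix.mulVec, dotProduct]
    simp only [hA, Matrix.of_apply, Pi.zero_apply]
    rw [← h i]
    apply Finset.sum_congr rfl; intro u _; ring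
  have hc0 := Matrix.eq_zero_of_mulVec_eq_zero hdet hmv
  intro u
  exact congrFun hc0 u

/-- Hartmann–Tzeng style bound. -/
lemma ht_bound {K : Type} [Field K] (S : Finset ℕ) (c B γ : ℕ → K)
    (hc : ∀ a ∈ S, c a ≠ 0) (hBinj : Set.InjOn B S) (hγinj : Set.InjOn γ S)
    (t k : ℕ) (ht1 : 1 ≤ t) (hS : S.Nonempty)
    (H : ∀ i < t, ∀ j ≤ k, ∑ a ∈ S, c a * B a ^ i * γ a ^ j = 0) :
    t + k + 1 ≤ S.card := by
  classical
  by_contra hcon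
  push_neg at hcon
  have hcard : S.card ≤ t + k := by omega
  have hpos : 1 ≤ S.card := Finset.card_pos.mpr hS
  set r : ℕ := min k (S.card - 1) with hr
  obtain ⟨R, hRS, hRcard⟩ := Finset.exists_subset_card_eq (s := S) (n := r) (by omega)
  set Q : Polynomial K := ∏ a ∈ R, (Polynomial.X - Polynomial.C (γ a)) with hQ
  have hQdeg : Q.natDegree = r := by
    rw [hQ, Polynomial.natDegree_prod_of_monic _ _ (fun a _ => Polynomial.monic_X_sub_C (γ a))]
    simp [hRcard]
  set d : ℕ → K := fun a => c a * Q.eval (γ a) with hd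
  have claim1 : ∀ i < t, ∑ a ∈ S, d a * B a ^ i = 0 := by
    intro i hi
    have expand : ∀ a ∈ S, d a * B a ^ i =
        ∑ j ∈ Finset.range (r + 1), Q.coeff j * (c a * B a ^ i * γ a ^ j) := by
      intro a _
      rw [hd]
      simp only []
      rw [Polynomial.eval_eq_sum_range, hQdeg, Finset.mul_sum, Finset.sum_mul]
      apply Finset.sum_congr rfl; intro j _; ring
    rw [Finset.sum_congr rfl expand, Finset.sum_comm]
    apply Finset.sum_eq_zero
    intro j hj
    rw [Finset.mem_range] at hj
    rw [← Finset.mul_sum, H i hi j (by omega)]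
    ring
  set T : Finset ℕ := S \ R with hT
  have hTS : T ⊆ S := Finset.sdiff_subset
  have hdT : ∀ a ∈ T, d a ≠ 0 := by
    intro a ha
    rw [hT, Finset.mem_sdiff] at ha
    apply mul_ne_zero (hc a ha.1)
    rw [hQ, Polynomial.eval_prod]
    apply Finset.prod_ne_zero_iff.mpr
    intro b hb
    simp only [Polynomial.eval_sub, Polynomial.eval_X, Polynomial.eval_C]
    exact sub_ne_zero_of_ne (fun hEq => ha.2 (hγinj ha.1 (hRS hb) hEq ▸ hb))
  have hdR : ∀ a ∈ R, d a = 0 := by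
    intro a ha
    have : Q.eval (γ a) = 0 := by
      rw [hQ, Polynomial.eval_prod]
      exact Finset.prod_eq_zero ha (by simp)
    rw [hd]; simp only []; rw [this]; ring
  have claimT : ∀ i < t, ∑ a ∈ T, d a * B a ^ i = 0 := by
    intro i hi
    have hsplit := Finset.sum_sdiff (f := fun a => d a * B a ^ i) hRS
    have hz : ∑ a ∈ R, d a * B a ^ i = 0 :=
      Finset.sum_eq_zero (fun a ha => by rw [hdR a ha]; ring)
    rw [hz, add_zero, claim1 i hi] at hsplit
    rw [← hT] at hsplit
    exact hsplit
  have hTcard : T.card = S.card - r := by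
    rw [hT, Finset.card_sdiff_of_subset hRS, hRcard]
  have hTpos : 0 < T.card := by omega
  have hTt : T.card ≤ t := by omega
  -- enumerate T
  set v : ℕ := T.card with hv
  set ι : Fin v → ℕ := fun u => (T.equivFin.symm u : ℕ) with hι
  have hιmem : ∀ u, ι u ∈ T := fun u => (T.equivFin.symm u).2
  have hιinj : Function.Injective ι := by
    intro u1 u2 h12
    have := Subtype.ext h12 (p := fun a => a ∈ T)
    exact T.equivFin.symm.injective (Subtype.ext h12)
  have hsum : ∀ F : ℕ → K, ∑ u : Fin v, F (ι u) = ∑ a ∈ T, F a := by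
    intro F
    rw [← Finset.sum_coe_sort T F]
    exact Fintype.sum_equiv T.equivFin.symm (fun u => F (ι u)) (fun s => F (s : ℕ)) (fun u => rfl)
  have key : ∀ u : Fin v, d (ι u) = 0 := by
    have := vdm_kernel (fun u => B (ι u))
      (fun u1 u2 h12 => hιinj (hBinj (hTS (hιmem u1)) (hTS (hιmem u2)) h12))
      (fun u => d (ι u))
      (fun i => by
        rw [hsum (fun a => d a * B a ^ (i : ℕ))]
        exact claimT i (lt_of_lt_of_le i.2 hTt))
    exact this
  have := hdT (ι ⟨0, hTpos⟩) (hιmem ⟨0, hTpos⟩)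
  exact this (key ⟨0, hTpos⟩)



open Polynomial

/-- The algebraic degree of a polynomial over `F_{2^n}` (in univariate form): the maximum
2-weight (number of ones in the binary expansion) of an exponent with nonzero coefficient. -/
def algDeg {Fq : Type} [Field Fq] (g : Polynomial Fq) : ℕ :=
  g.support.sup fun i => (Nat.digits 2 i).sum

/-- if the zero set of `f` contains `⋃_{j=0}^{k} V(α, l + j·m + δ - 1, q - δ)`
(`α` a primitive element of `F_q`, `gcd(m, q-1) = 1`), and `e` is the smallest positive
integer with `∑_{i=1}^{e} C(n,i) ≥ q - δ + k`, then every nonzero annihilator of `1 + f`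
(a nonzero polynomial of degree `≤ q - 1` vanishing on the zero set of `f`) has algebraic
degree at least `e - 1`, i.e. `LDA(1 + f) ≥ e - 1`. -/
theorem LDA_one_add_f_lower_bound (n : ℕ) (hn : 1 ≤ n) (Fq : Type) [Field Fq] [Fintype Fq]
    [DecidableEq Fq] (hq : Fintype.card Fq = 2 ^ n) (f : Fq → ZMod 2) (α : Fq)
    (hα : ∀ x : Fq, x ≠ 0 ↔ ∃ j : ℕ, α ^ j = x) (l k δ m : ℕ)
    (hδ1 : 1 ≤ δ) (hδ2 : δ ≤ 2 ^ n - 1) (hm : 1 ≤ m) (hgcd : Nat.gcd m (2 ^ n - 1) = 1)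
    (hzero : ∀ j ≤ k, ∀ i < 2 ^ n - δ, f (α ^ (l + j * m + (δ - 1) + i)) = 0)
    (e : ℕ) (he1 : 1 ≤ e) (he2 : 2 ^ n - δ + k ≤ ∑ i ∈ Finset.Icc 1 e, n.choose i)
    (hemin : ∀ e' : ℕ, 1 ≤ e' → e' < e →
      ∑ i ∈ Finset.Icc 1 e', n.choose i < 2 ^ n - δ + k) :
    ∀ g : Polynomial Fq, g ≠ 0 → g.natDegree ≤ 2 ^ n - 1 →
      (∀ x : Fq, f x = 0 → g.eval x = 0) → e - 1 ≤ algDeg g := by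
  intro g hg0 hgdeg hgann
  by_cases he' : e ≤ 1
  · have : e - 1 = 0 := by omega
    rw [this]; exact Nat.zero_le _
  push_neg at he'
  have he2' : 2 ≤ e := he'
  -- e ≤ n
  have hen : e ≤ n := by
    by_contra hne
    push_neg at hne
    have hsub : Finset.Icc 1 n ⊆ Finset.Icc 1 e := by
      intro x hx; simp only [Finset.mem_Icc] at *; omega
    have hsum_eq : ∑ i ∈ Finset.Icc 1 e, n.choose i = ∑ i ∈ Finset.Icc 1 n, n.choose i := by
      refine (Finset.sum_subset hsub ?_).symm
      intro x hx hnx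
      simp only [Finset.mem_Icc] at hx hnx
      exact Nat.choose_eq_zero_of_lt (by omega)
    have := hemin n hn hne
    omega
  have hn2 : 2 ≤ n := by omega
  have hq4 : 4 ≤ 2 ^ n := by
    calc (4:ℕ) = 2^2 := rfl
    _ ≤ 2^n := Nat.pow_le_pow_right (by norm_num) hn2
  set N : ℕ := 2 ^ n - 1 with hN
  have hN3 : 3 ≤ N := by omega
  -- α ≠ 0
  have hα0 : α ≠ 0 := by
    intro h0
    have hsub : (Finset.univ : Finset Fq) ⊆ {0, 1} := by
      intro x _
      by_cases hx : x = 0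
      · simp [hx]
      · obtain ⟨j, hj⟩ := (hα x).mp hx
        subst h0
        cases j with
        | zero =>
          simp only [pow_zero] at hj
          simp [← hj]
        | succ j =>
          rw [zero_pow (by omega)] at hj
          exact absurd hj.symm hx
    have hcard : Fintype.card Fq ≤ 2 := by
      calc Fintype.card Fq = (Finset.univ : Finset Fq).card := rfl
      _ ≤ ({0, 1} : Finset Fq).card := Finset.card_le_card hsub
      _ ≤ 2 := Finset.card_insert_le _ _ |>.trans (by simp)
    omega
  -- order of α
  set u : Fqˣ := Units.mk0 α hα0 with hu
  have hordu : orderOf u = N := by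
    have h1 : ∀ v : Fqˣ, v ∈ Subgroup.zpowers u := by
      intro v
      obtain ⟨j, hj⟩ := (hα (v : Fq)).mp (Units.ne_zero v)
      refine Subgroup.mem_zpowers_iff.mpr ⟨(j : ℤ), ?_⟩
      rw [zpow_natCast]
      apply Units.ext
      rw [Units.val_pow_eq_pow_val]
      exact hj
    have h2 := orderOf_eq_card_of_forall_mem_zpowers h1
    rw [h2, Nat.card_eq_fintype_card, Fintype.card_units, hq]
  have horda : orderOf α = N := by
    rw [← hordu, ← orderOf_units]
    rfl
  have hαN : α ^ N = 1 := by
    rw [← horda]; exact pow_orderOf_eq_one α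
  have hupow : ∀ a b : ℕ, α ^ a = α ^ b ↔ a ≡ b [MOD N] := by
    intro a b
    rw [← hordu]
    rw [← pow_eq_pow_iff_modEq (x := u)]
    constructor
    · intro h; apply Units.ext; rw [Units.val_pow_eq_pow_val, Units.val_pow_eq_pow_val]; exact h
    · intro h
      have := congrArg (Units.val) h
      rw [Units.val_pow_eq_pow_val, Units.val_pow_eq_pow_val] at this
      exact this
  -- reduced polynomial
  set aN : Fq := g.coeff N with haN
  set gg : Polynomial Fq := g - Polynomial.C aN * Polynomial.X ^ N + Polynomial.C aN with hgg
  have heval : ∀ x : Fq, x ^ N = 1 → gg.eval x = g.eval x := by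
    intro x hx
    rw [hgg]
    simp only [eval_add, eval_sub, eval_mul, eval_C, eval_pow, eval_X, hx]
    ring
  have hcoeff : ∀ a : ℕ, a ≠ 0 → a ≠ N → gg.coeff a = g.coeff a := by
    intro a h0 hNa
    rw [hgg]
    simp only [coeff_add, coeff_sub, coeff_C_mul, coeff_X_pow, coeff_C]
    rw [if_neg hNa, if_neg h0]
    ring
  have hcoeffN : gg.coeff N = 0 := by
    rw [hgg]
    simp only [coeff_add, coeff_sub, coeff_C_mul, coeff_X_pow, coeff_C]
    rw [if_neg (show ¬ N = 0 by omega)]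
    simp only [if_true, mul_one, add_zero, haN, sub_self]
  have hsupp : gg.support ⊆ Finset.range N := by
    intro a ha
    rw [Polynomial.mem_support_iff] at ha
    rw [Finset.mem_range]
    by_contra hge
    push_neg at hge
    rcases eq_or_lt_of_le hge with hEq | hlt
    · exact ha (hEq ▸ hcoeffN)
    · have : g.coeff a = 0 := Polynomial.coeff_eq_zero_of_natDegree_lt (by omega)
      exact ha ((hcoeff a (by omega) (by omega)).trans this)
  by_contra hcon
  push_neg at hcon
  have halg : algDeg g ≤ e - 2 := by omega
  by_cases hgg0 : gg = 0
  -- degenerate case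
  · have haN0 : aN ≠ 0 := by
      intro h
      apply hg0
      have : g = gg + Polynomial.C aN * Polynomial.X ^ N - Polynomial.C aN := by rw [hgg]; ring
      rw [this, hgg0, h]; simp
    have hNsupp : N ∈ g.support := by
      rw [Polynomial.mem_support_iff]; exact haN0
    have : (Nat.digits 2 N).sum ≤ algDeg g :=
      Finset.le_sup (f := fun i => (Nat.digits 2 i).sum) hNsupp
    rw [hN, wt_pred_pow] at this
    omega
  -- main case
  · set t : ℕ := 2 ^ n - δ with htdef
    have ht1 : 1 ≤ t := by omega
    set s : ℕ := l + (δ - 1) with hs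
    set S : Finset ℕ := gg.support with hS
    have hSne : S.Nonempty := Polynomial.support_nonempty.mpr hgg0
    set B : ℕ → Fq := fun a => α ^ a with hB
    set γ : ℕ → Fq := fun a => (α ^ a) ^ m with hγ
    set c : ℕ → Fq := fun a => gg.coeff a * α ^ (a * s) with hc
    have hclt : ∀ a ∈ S, a < N := fun a ha => Finset.mem_range.mp (hsupp ha)
    have hcne : ∀ a ∈ S, c a ≠ 0 := by
      intro a ha
      exact mul_ne_zero (Polynomial.mem_support_iff.mp ha) (pow_ne_zero _ hα0)
    have hBinj : Set.InjOn B S := by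
      intro a ha b hb hab
      have := (hupow a b).mp hab
      have ha' := hclt a ha; have hb' := hclt b hb
      rwa [Nat.ModEq, Nat.mod_eq_of_lt ha', Nat.mod_eq_of_lt hb'] at this
    have hγinj : Set.InjOn γ S := by
      intro a ha b hb hab
      rw [hγ] at hab
      simp only [← pow_mul] at hab
      have hmod := (hupow (a * m) (b * m)).mp hab
      have hmod2 : a ≡ b [MOD N] :=
        Nat.ModEq.cancel_right_of_coprime (by rw [Nat.gcd_comm]; exact hgcd) hmod
      have ha' := hclt a ha; have hb' := hclt b hb
      rwa [Nat.ModEq, Nat.mod_eq_of_lt ha', Nat.mod_eq_of_lt hb'] at hmod2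
    have H : ∀ i < t, ∀ j ≤ k, ∑ a ∈ S, c a * B a ^ i * γ a ^ j = 0 := by
      intro i hi j hj
      set E : ℕ := l + j * m + (δ - 1) + i with hE
      have hfz : f (α ^ E) = 0 := hzero j hj i hi
      have hgz : g.eval (α ^ E) = 0 := hgann _ hfz
      have hxN : (α ^ E) ^ N = 1 := by
        rw [← pow_mul, mul_comm, pow_mul, hαN, one_pow]
      have hggz : gg.eval (α ^ E) = 0 := by rw [heval _ hxN]; exact hgz
      have hevalsum : gg.eval (α ^ E) = ∑ a ∈ S, gg.coeff a * (α ^ E) ^ a := by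
        rw [Polynomial.eval_eq_sum, Polynomial.sum_def]
      rw [← hggz, hevalsum]
      apply Finset.sum_congr rfl
      intro a _
      rw [hc, hB, hγ]
      simp only []
      have key : (α ^ E) ^ a = α ^ (a * s) * ((α ^ a) ^ i * ((α ^ a) ^ m) ^ j) := by
        rw [← pow_mul α a m, ← pow_mul α (a * m) j, ← pow_mul α a i, ← pow_add,
          ← pow_add, ← pow_mul α E a]
        congr 1
        rw [hE, hs]
        ring
      rw [key]
      ring
    have hht := ht_bound S c B γ hcne hBinj hγinj t k ht1 hSne H
    -- counting
    have hwS : ∀ a ∈ S, (Nat.digits 2 a).sum ≤ e - 2 := by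
      intro a ha
      by_cases h0 : a = 0
      · subst h0; simp
      · have haN' : a ≠ N := by have := hclt a ha; omega
        have : a ∈ g.support := by
          rw [Polynomial.mem_support_iff, ← hcoeff a h0 haN']
          exact Polynomial.mem_support_iff.mp ha
        exact le_trans (Finset.le_sup (f := fun i => (Nat.digits 2 i).sum) this) halg
    have haS : ∀ a ∈ S, a < 2 ^ n := fun a ha => by have := hclt a ha; omega
    have hcount := count_low_weight n (e - 2) S haS hwS
    -- sum manipulation
    have hsplit : ∑ j ∈ Finset.range (e - 2 + 1), n.choose j
        = n.choose 0 + ∑ j ∈ Finset.Icc 1 (e - 2), n.choose j := by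
      rw [Finset.sum_range_succ']
      have : Finset.Icc 1 (e - 2) = Finset.Ico 1 (e - 2 + 1) := by
        rw [Finset.Ico_add_one_right_eq_Icc]
      rw [this, Finset.sum_Ico_eq_sum_range]
      simp only [Nat.add_sub_cancel]
      have : ∀ j, n.choose (1 + j) = n.choose (j + 1) := fun j => by rw [add_comm]
      rw [Finset.sum_congr rfl (fun j _ => this j)]
      omega
    have hicc : ∑ j ∈ Finset.Icc 1 (e - 2), n.choose j ≤ t + k - 1 := by
      by_cases he3 : 3 ≤ e
      · have := hemin (e - 2) (by omega) (by omega)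
        omega
      · have : e = 2 := by omega
        subst this
        simp
    have : S.card ≤ t + k := by
      have h1 : n.choose 0 = 1 := Nat.choose_zero_right n
      omega
    omega
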